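/- Let G ≅ ⟨x | y⟩ be a ball with x, y and G numbers and x < y, and suppose G is balanced, i.e. G + G = x + y as values. If the value of G is a nonzero dyadic rational a/2^p, where either p = 0 and a is a nonzero integer, or p ≥ 1 and a is an odd integer, then as values y − x ≤ 2/2^p; equivalently, the radius Δ = (x − y)/2 satisfies −1/2^p ≤ Δ < 0. -/

import Mathlib

universe v

namespace SetTheory

/-- Pre-games (formerly `SetTheory.PGame` in Mathlib), with their old definition. -/
inductive PGame : Type (v + 1)
  | mk : ∀ α β : Type v, (α → PGame) → (β → PGame) → PGame

namespace PGame

def LeftMoves : PGame → Type v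
  | mk l _ _ _ => l

def RightMoves : PGame → Type v
  | mk _ r _ _ => r

def moveLeft : ∀ g : PGame, LeftMoves g → PGame
  | mk _ _ L _ => L

def moveRight : ∀ g : PGame, RightMoves g → PGame
  | mk _ _ _ R => R

/-- The pair (`x ≤ y`, `x ⧏ y`), defined by the old mutual recursion. -/
noncomputable def leLf (x : PGame.{v}) : PGame.{v} → Prop × Prop :=
  PGame.rec (motive := fun _ => PGame.{v} → Prop × Prop)
    (fun _ _ _ _ IHxl IHxr y =>
      PGame.rec (motive := fun _ => Prop × Prop)
        (fun yl yr yL yR IHyl IHyr =>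
          ((∀ i, (IHxl i (mk yl yr yL yR)).2) ∧ ∀ j, (IHyr j).2,
           (∃ i, (IHyl i).1) ∨ ∃ j, (IHxr j (mk yl yr yL yR)).1))
        y) x

noncomputable instance : LE PGame := ⟨fun x y => (leLf x y).1⟩

noncomputable def LF (x y : PGame) : Prop := (leLf x y).2

noncomputable instance : LT PGame := ⟨fun x y => x ≤ y ∧ LF x y⟩

def Numeric : PGame → Prop
  | ⟨_, _, L, R⟩ => (∀ i j, L i < R j) ∧ (∀ i, Numeric (L i)) ∧ ∀ j, Numeric (R j)

instance : Zero PGame := ⟨⟨PEmpty, PEmpty, PEmpty.elim, PEmpty.elim⟩⟩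

instance : One PGame := ⟨⟨PUnit, PEmpty, fun _ => 0, PEmpty.elim⟩⟩

def neg : PGame → PGame
  | ⟨l, r, L, R⟩ => ⟨r, l, fun i => neg (R i), fun i => neg (L i)⟩

instance : Neg PGame := ⟨neg⟩

noncomputable def add (x : PGame.{v}) : PGame.{v} → PGame.{v} :=
  PGame.rec (motive := fun _ => PGame.{v} → PGame.{v})
    (fun xl xr _ _ IHxl IHxr y =>
      PGame.rec (motive := fun _ => PGame.{v})
        (fun yl yr yL yR IHyl IHyr =>
          mk (xl ⊕ yl) (xr ⊕ yr) (Sum.elim (fun i => IHxl i (mk yl yr yL yR)) IHyl)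
            (Sum.elim (fun i => IHxr i (mk yl yr yL yR)) IHyr))
        y) x

noncomputable instance : Add PGame := ⟨add⟩

noncomputable def Equiv (x y : PGame) : Prop := x ≤ y ∧ y ≤ x

noncomputable instance setoid : Setoid PGame := Relation.EqvGen.setoid Equiv

def powHalf : ℕ → PGame
  | 0 => 1
  | n + 1 => ⟨PUnit, PUnit, fun _ => 0, fun _ => powHalf n⟩

end PGame

abbrev Game : Type (v + 1) := Quotient PGame.setoid

namespace Game

noncomputable instance : Zero Game := ⟨⟦0⟧⟩

noncomputable instance : Add Game := ⟨fun g h => ⟦g.out + h.out⟧⟩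

noncomputable instance : Neg Game := ⟨fun g => ⟦-g.out⟧⟩

noncomputable instance : Sub Game := ⟨fun g h => g + -h⟩

noncomputable instance : LE Game := ⟨fun g h => g.out ≤ h.out⟩

noncomputable def nsm : ℕ → Game → Game
  | 0, _ => 0
  | n + 1, g => nsm n g + g

noncomputable instance : SMul ℤ Game := ⟨fun n g => match n with
  | Int.ofNat n => nsm n g
  | Int.negSucc n => -nsm (n + 1) g⟩

end Game

end SetTheory

open SetTheory PGame

universe u

/-- Ordinal sum `G : H`: players may move in the base `G` (ending all play in the
subordinate) or in the subordinate `H`. -/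
def ordinalSum (G : PGame.{u}) : PGame.{u} → PGame.{u}
  | ⟨yl, yr, yL, yR⟩ =>
    ⟨G.LeftMoves ⊕ yl, G.RightMoves ⊕ yr,
     Sum.elim G.moveLeft fun j => ordinalSum G (yL j),
     Sum.elim G.moveRight fun j => ordinalSum G (yR j)⟩

/-- `G ≜ H`: equivalence modulo domination.  Every Left option of `G` is `≤` some Left
option of `H`, every Left option of `H` is `≤` some Left option of `G`, every Right option
of `G` is `≥` some Right option of `H`, and every Right option of `H` is `≥` some Right
option of `G`. -/
def EquivDom (G H : PGame) : Prop :=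
  (∀ i, ∃ j, G.moveLeft i ≤ H.moveLeft j) ∧
  (∀ j, ∃ i, H.moveLeft j ≤ G.moveLeft i) ∧
  (∀ i, ∃ j, H.moveRight j ≤ G.moveRight i) ∧
  (∀ j, ∃ i, G.moveRight i ≤ H.moveRight j)

/-- The ball `⟨a | b⟩`: the game with exactly one Left option `a` and exactly one Right
option `b`. -/
def ball (a b : PGame.{u}) : PGame.{u} :=
  ⟨PUnit, PUnit, fun _ => a, fun _ => b⟩

/-- The canonical form of a natural number: `0 ≅ ⟨ | ⟩` and `n+1 ≅ ⟨n | ⟩`. -/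
def canonNat : ℕ → PGame
  | 0 => 0
  | n + 1 => ⟨PUnit, PEmpty, fun _ => canonNat n, PEmpty.elim⟩

/-- The canonical form of an integer: for `n ≥ 0` it is `canonNat n`, and the canonical
form of a negative integer is the negative of the canonical form of its absolute value. -/
def canonInt (n : ℤ) : PGame :=
  if 0 ≤ n then canonNat n.toNat else -canonNat (-n).toNat

/-- The game value of the dyadic rational `a / 2 ^ q`. -/
noncomputable def dyadicVal (a : ℤ) (q : ℕ) : Game :=
  a • (⟦powHalf q⟧ : Game)


namespace SetTheory
namespace PGame

infix:50 " ⧏ " => LF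

@[simp] theorem moveLeft_mk' {xl xr : Type v} {xL : xl → PGame.{v}} {xR : xr → PGame.{v}} :
    (mk xl xr xL xR).moveLeft = xL := rfl

@[simp] theorem moveRight_mk' {xl xr : Type v} {xL : xl → PGame.{v}} {xR : xr → PGame.{v}} :
    (mk xl xr xL xR).moveRight = xR := rfl

theorem le_iff_forall_lf {x y : PGame.{v}} :
    x ≤ y ↔ (∀ i, x.moveLeft i ⧏ y) ∧ ∀ j, x ⧏ y.moveRight j := by
  cases x; cases y; exact Iff.rfl

theorem lf_iff_exists_le {x y : PGame.{v}} :
    x ⧏ y ↔ (∃ i, x ≤ y.moveLeft i) ∨ ∃ j, x.moveRight j ≤ y := by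
  cases x; cases y; exact Iff.rfl

theorem pg_not_le_lf (x : PGame.{v}) :
    ∀ y : PGame.{v}, (¬ x ≤ y ↔ y ⧏ x) ∧ (¬ y ≤ x ↔ x ⧏ y) := by
  induction x with
  | mk xl xr xL xR IHxl IHxr =>
  intro y
  induction y with
  | mk yl yr yL yR IHyl IHyr =>
  have h1 : ∀ i, (xL i ⧏ mk yl yr yL yR ↔ ¬ mk yl yr yL yR ≤ xL i) :=
    fun i => (IHxl i _).2.symm
  have h2 : ∀ j, (mk xl xr xL xR ⧏ yR j ↔ ¬ yR j ≤ mk xl xr xL xR) :=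
    fun j => (IHyr j).2.symm
  have h3 : ∀ j, (yL j ⧏ mk xl xr xL xR ↔ ¬ mk xl xr xL xR ≤ yL j) :=
    fun j => (IHyl j).1.symm
  have h4 : ∀ i, (mk yl yr yL yR ⧏ xR i ↔ ¬ xR i ≤ mk yl yr yL yR) :=
    fun i => (IHxr i _).1.symm
  constructor
  · rw [le_iff_forall_lf, lf_iff_exists_le]
    simp only [moveLeft_mk', moveRight_mk', not_and_or, not_forall]
    exact or_congr (exists_congr fun i => by rw [h1 i, not_not])
      (exists_congr fun j => by rw [h2 j, not_not])
  · rw [le_iff_forall_lf, lf_iff_exists_le]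
    simp only [moveLeft_mk', moveRight_mk', not_and_or, not_forall]
    exact or_congr (exists_congr fun j => by rw [h3 j, not_not])
      (exists_congr fun i => by rw [h4 i, not_not])

theorem pg_not_le {x y : PGame.{v}} : ¬ x ≤ y ↔ y ⧏ x := (pg_not_le_lf x y).1

theorem pg_not_lf {x y : PGame.{v}} : ¬ x ⧏ y ↔ y ≤ x := by
  rw [← pg_not_le, not_not]

theorem pg_le_refl (x : PGame.{v}) : x ≤ x := by
  induction x with
  | mk xl xr xL xR IHl IHr =>
  exact le_iff_forall_lf.2 ⟨fun i => lf_iff_exists_le.2 (Or.inl ⟨i, IHl i⟩),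
    fun j => lf_iff_exists_le.2 (Or.inr ⟨j, IHr j⟩)⟩

theorem pg_le_trans_aux {x y z : PGame.{v}}
    (h₁ : ∀ {i}, y ≤ z → z ≤ x.moveLeft i → y ≤ x.moveLeft i)
    (h₂ : ∀ {j}, z.moveRight j ≤ x → x ≤ y → z.moveRight j ≤ y) (hxy : x ≤ y) (hyz : y ≤ z) :
    x ≤ z :=
  le_iff_forall_lf.2
    ⟨fun i => pg_not_le.1 fun h => pg_not_le.2 ((le_iff_forall_lf.1 hxy).1 i) (h₁ hyz h),
    fun j => pg_not_le.1 fun h => pg_not_le.2 ((le_iff_forall_lf.1 hyz).2 j) (h₂ h hxy)⟩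

theorem pg_le_trans_all (x : PGame.{v}) : ∀ y z : PGame.{v},
    (x ≤ y → y ≤ z → x ≤ z) ∧ (y ≤ z → z ≤ x → y ≤ x) ∧ (z ≤ x → x ≤ y → z ≤ y) := by
  induction x with
  | mk xl xr xL xR IHxl IHxr =>
  intro y
  induction y with
  | mk yl yr yL yR IHyl IHyr =>
  intro z
  induction z with
  | mk zl zr zL zR IHzl IHzr =>
  exact ⟨pg_le_trans_aux (fun {i} => (IHxl i _ _).2.1) (fun {j} => (IHzr j).2.2),
    pg_le_trans_aux (fun {i} => (IHyl i _).2.2) (fun {j} => (IHxr j _ _).1),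
    pg_le_trans_aux (fun {i} => (IHzl i).1) (fun {j} => (IHyr j _).2.1)⟩

instance pgPreorder : Preorder PGame.{v} where
  le := (· ≤ ·)
  lt := (· < ·)
  le_refl := pg_le_refl
  le_trans := fun x y z => (pg_le_trans_all x y z).1
  lt_iff_le_not_ge := fun _ _ => and_congr_right fun _ => pg_not_le.symm

theorem lf_of_le_of_lf {x y z : PGame.{v}} (h₁ : x ≤ y) (h₂ : y ⧏ z) : x ⧏ z :=
  pg_not_le.1 fun h => pg_not_le.2 h₂ (le_trans h h₁)

theorem lf_of_lf_of_le {x y z : PGame.{v}} (h₁ : x ⧏ y) (h₂ : y ≤ z) : x ⧏ z :=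
  pg_not_le.1 fun h => pg_not_le.2 h₁ (le_trans h₂ h)

theorem lf_of_lt {x y : PGame.{v}} (h : x < y) : x ⧏ y := h.2

theorem moveLeft_lf {x : PGame.{v}} (i : x.LeftMoves) : x.moveLeft i ⧏ x :=
  lf_iff_exists_le.2 (Or.inl ⟨i, pg_le_refl _⟩)

theorem lf_moveRight {x : PGame.{v}} (j : x.RightMoves) : x ⧏ x.moveRight j :=
  lf_iff_exists_le.2 (Or.inr ⟨j, pg_le_refl _⟩)

protected theorem not_le {x y : PGame.{v}} : ¬ x ≤ y ↔ y ⧏ x := pg_not_le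

theorem equiv_iff {x y : PGame.{v}} : PGame.Equiv x y ↔ x ≤ y ∧ y ≤ x := Iff.rfl

theorem pg_equiv_symm {x y : PGame.{v}} (h : PGame.Equiv x y) : PGame.Equiv y x :=
  equiv_iff.2 ⟨(equiv_iff.1 h).2, (equiv_iff.1 h).1⟩

theorem eqvGen_equiv_iff {x y : PGame.{v}} :
    Relation.EqvGen PGame.Equiv x y ↔ PGame.Equiv x y := by
  constructor
  · intro h
    induction h with
    | rel a b h => exact h
    | refl a => exact equiv_iff.2 ⟨pg_le_refl a, pg_le_refl a⟩
    | symm a b _ ih => exact pg_equiv_symm ih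
    | trans a b c _ _ ih1 ih2 =>
      exact equiv_iff.2 ⟨le_trans (equiv_iff.1 ih1).1 (equiv_iff.1 ih2).1,
        le_trans (equiv_iff.1 ih2).2 (equiv_iff.1 ih1).2⟩
  · exact Relation.EqvGen.rel _ _

theorem game_eq {x y : PGame.{v}} (h : PGame.Equiv x y) : (⟦x⟧ : Game.{v}) = ⟦y⟧ :=
  Quotient.sound (Relation.EqvGen.rel _ _ h)

theorem game_exact {x y : PGame.{v}} (h : (⟦x⟧ : Game.{v}) = ⟦y⟧) : PGame.Equiv x y :=
  eqvGen_equiv_iff.1 (Quotient.exact h)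

theorem out_equiv (x : PGame.{v}) : PGame.Equiv (Quotient.out (⟦x⟧ : Game.{v})) x :=
  game_exact (Quotient.out_eq _)

theorem quot_le_iff {x y : PGame.{v}} : (⟦x⟧ : Game.{v}) ≤ ⟦y⟧ ↔ x ≤ y := by
  show Quotient.out (⟦x⟧ : Game.{v}) ≤ Quotient.out (⟦y⟧ : Game.{v}) ↔ x ≤ y
  have h1 := equiv_iff.1 (out_equiv x)
  have h2 := equiv_iff.1 (out_equiv y)
  exact ⟨fun h => le_trans h1.2 (le_trans h h2.1), fun h => le_trans h1.1 (le_trans h h2.2)⟩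

theorem le_iff_game_le {x y : PGame.{v}} : x ≤ y ↔ (⟦x⟧ : Game.{v}) ≤ ⟦y⟧ := quot_le_iff.symm

/-! negation -/

theorem pg_neg_le_lf (x : PGame.{v}) :
    ∀ y : PGame.{v}, (-y ≤ -x ↔ x ≤ y) ∧ (-y ⧏ -x ↔ x ⧏ y) := by
  induction x with
  | mk xl xr xL xR IHxl IHxr =>
  intro y
  induction y with
  | mk yl yr yL yR IHyl IHyr =>
  refine ⟨⟨fun h => ?_, fun h => ?_⟩, ⟨fun h => ?_, fun h => ?_⟩⟩
  · have h' := le_iff_forall_lf.1 h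
    exact le_iff_forall_lf.2 ⟨fun i => (IHxl i _).2.1 (h'.2 i), fun j => (IHyr j).2.1 (h'.1 j)⟩
  · have h' := le_iff_forall_lf.1 h
    exact le_iff_forall_lf.2 ⟨fun j => (IHyr j).2.2 (h'.2 j), fun i => (IHxl i _).2.2 (h'.1 i)⟩
  · rcases lf_iff_exists_le.1 h with ⟨i, hi⟩ | ⟨j, hj⟩
    · exact lf_iff_exists_le.2 (Or.inr ⟨i, (IHxr i _).1.1 hi⟩)
    · exact lf_iff_exists_le.2 (Or.inl ⟨j, (IHyl j).1.1 hj⟩)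
  · rcases lf_iff_exists_le.1 h with ⟨j, hj⟩ | ⟨i, hi⟩
    · exact lf_iff_exists_le.2 (Or.inr ⟨j, (IHyl j).1.2 hj⟩)
    · exact lf_iff_exists_le.2 (Or.inl ⟨i, (IHxr i _).1.2 hi⟩)

theorem pg_neg_lt_neg {x y : PGame.{v}} (h : x < y) : -y < -x :=
  ⟨(pg_neg_le_lf x y).1.2 h.1, (pg_neg_le_lf x y).2.2 h.2⟩

theorem pg_neg_congr {x y : PGame.{v}} (h : PGame.Equiv x y) : PGame.Equiv (-x) (-y) :=
  equiv_iff.2 ⟨(pg_neg_le_lf y x).1.2 (equiv_iff.1 h).2, (pg_neg_le_lf x y).1.2 (equiv_iff.1 h).1⟩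

/-! addition -/

noncomputable def toLeftMovesAdd {x y : PGame.{v}} :
    x.LeftMoves ⊕ y.LeftMoves ≃ (x + y).LeftMoves := by
  cases x; cases y; exact _root_.Equiv.refl _

noncomputable def toRightMovesAdd {x y : PGame.{v}} :
    x.RightMoves ⊕ y.RightMoves ≃ (x + y).RightMoves := by
  cases x; cases y; exact _root_.Equiv.refl _

theorem add_moveLeft_inl {x y : PGame.{v}} (i : x.LeftMoves) :
    (x + y).moveLeft (toLeftMovesAdd (Sum.inl i)) = x.moveLeft i + y := by
  cases x; cases y; rfl

theorem add_moveLeft_inr {x y : PGame.{v}} (i : y.LeftMoves) :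
    (x + y).moveLeft (toLeftMovesAdd (Sum.inr i)) = x + y.moveLeft i := by
  cases x; cases y; rfl

theorem add_moveRight_inl {x y : PGame.{v}} (i : x.RightMoves) :
    (x + y).moveRight (toRightMovesAdd (Sum.inl i)) = x.moveRight i + y := by
  cases x; cases y; rfl

theorem add_moveRight_inr {x y : PGame.{v}} (i : y.RightMoves) :
    (x + y).moveRight (toRightMovesAdd (Sum.inr i)) = x + y.moveRight i := by
  cases x; cases y; rfl

theorem leftMoves_add_cases {x y : PGame.{v}} (k : (x + y).LeftMoves)
    {P : (x + y).LeftMoves → Prop} (hl : ∀ i, P (toLeftMovesAdd (Sum.inl i)))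
    (hr : ∀ i, P (toLeftMovesAdd (Sum.inr i))) : P k := by
  rw [← toLeftMovesAdd.apply_symm_apply k]
  cases toLeftMovesAdd.symm k with
  | inl i => exact hl i
  | inr i => exact hr i

theorem rightMoves_add_cases {x y : PGame.{v}} (k : (x + y).RightMoves)
    {P : (x + y).RightMoves → Prop} (hl : ∀ i, P (toRightMovesAdd (Sum.inl i)))
    (hr : ∀ i, P (toRightMovesAdd (Sum.inr i))) : P k := by
  rw [← toRightMovesAdd.apply_symm_apply k]
  cases toRightMovesAdd.symm k with
  | inl i => exact hl i
  | inr i => exact hr i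

theorem pg_add_le_lf (x : PGame.{v}) : ∀ y z : PGame.{v},
    (x ≤ y → x + z ≤ y + z) ∧ (x ⧏ y → x + z ⧏ y + z) := by
  induction x with
  | mk xl xr xL xR IHxl IHxr =>
  intro y
  induction y with
  | mk yl yr yL yR IHyl IHyr =>
  intro z
  induction z with
  | mk zl zr zL zR IHzl IHzr =>
  refine ⟨fun h => ?_, fun h => ?_⟩
  · have h' := le_iff_forall_lf.1 h
    refine le_iff_forall_lf.2 ⟨?_, ?_⟩
    · rintro (i | k)
      · exact (IHxl i _ _).2 (h'.1 i)
      · exact lf_of_le_of_lf ((IHzl k).1 h)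
          (moveLeft_lf (x := mk yl yr yL yR + mk zl zr zL zR) (Sum.inr k))
    · rintro (j | k)
      · exact (IHyr j _).2 (h'.2 j)
      · exact lf_of_lf_of_le (lf_moveRight (x := mk xl xr xL xR + mk zl zr zL zR) (Sum.inr k))
          ((IHzr k).1 h)
  · rcases lf_iff_exists_le.1 h with ⟨i, hi⟩ | ⟨j, hj⟩
    · exact lf_iff_exists_le.2 (Or.inl ⟨Sum.inl i, (IHyl i _).1 hi⟩)
    · exact lf_iff_exists_le.2 (Or.inr ⟨Sum.inl j, (IHxr j _ _).1 hj⟩)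

theorem pg_add_comm_le (x : PGame.{v}) : ∀ y : PGame.{v}, x + y ≤ y + x := by
  induction x with
  | mk xl xr xL xR IHxl IHxr =>
  intro y
  induction y with
  | mk yl yr yL yR IHyl IHyr =>
  refine le_iff_forall_lf.2 ⟨?_, ?_⟩
  · rintro (i | j)
    · exact lf_iff_exists_le.2 (Or.inl ⟨Sum.inr i, IHxl i _⟩)
    · exact lf_iff_exists_le.2 (Or.inl ⟨Sum.inl j, IHyl j⟩)
  · rintro (j | i)
    · exact lf_iff_exists_le.2 (Or.inr ⟨Sum.inr j, IHyr j⟩)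
    · exact lf_iff_exists_le.2 (Or.inr ⟨Sum.inl i, IHxr i _⟩)

theorem pg_add_assoc (x : PGame.{v}) : ∀ y z : PGame.{v},
    (x + y) + z ≤ x + (y + z) ∧ x + (y + z) ≤ (x + y) + z := by
  induction x with
  | mk xl xr xL xR IHxl IHxr =>
  intro y
  induction y with
  | mk yl yr yL yR IHyl IHyr =>
  intro z
  induction z with
  | mk zl zr zL zR IHzl IHzr =>
  refine ⟨le_iff_forall_lf.2 ⟨?_, ?_⟩, le_iff_forall_lf.2 ⟨?_, ?_⟩⟩
  · rintro ((i | j) | k)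
    · exact lf_iff_exists_le.2 (Or.inl ⟨Sum.inl i, (IHxl i (mk yl yr yL yR) (mk zl zr zL zR)).1⟩)
    · exact lf_iff_exists_le.2 (Or.inl ⟨Sum.inr (Sum.inl j), (IHyl j (mk zl zr zL zR)).1⟩)
    · exact lf_iff_exists_le.2 (Or.inl ⟨Sum.inr (Sum.inr k), (IHzl k).1⟩)
  · rintro (i | (j | k))
    · exact lf_iff_exists_le.2 (Or.inr ⟨Sum.inl (Sum.inl i), (IHxr i (mk yl yr yL yR) (mk zl zr zL zR)).1⟩)
    · exact lf_iff_exists_le.2 (Or.inr ⟨Sum.inl (Sum.inr j), (IHyr j (mk zl zr zL zR)).1⟩)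
    · exact lf_iff_exists_le.2 (Or.inr ⟨Sum.inr k, (IHzr k).1⟩)
  · rintro (i | (j | k))
    · exact lf_iff_exists_le.2 (Or.inl ⟨Sum.inl (Sum.inl i), (IHxl i (mk yl yr yL yR) (mk zl zr zL zR)).2⟩)
    · exact lf_iff_exists_le.2 (Or.inl ⟨Sum.inl (Sum.inr j), (IHyl j (mk zl zr zL zR)).2⟩)
    · exact lf_iff_exists_le.2 (Or.inl ⟨Sum.inr k, (IHzl k).2⟩)
  · rintro ((i | j) | k)
    · exact lf_iff_exists_le.2 (Or.inr ⟨Sum.inl i, (IHxr i (mk yl yr yL yR) (mk zl zr zL zR)).2⟩)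
    · exact lf_iff_exists_le.2 (Or.inr ⟨Sum.inr (Sum.inl j), (IHyr j (mk zl zr zL zR)).2⟩)
    · exact lf_iff_exists_le.2 (Or.inr ⟨Sum.inr (Sum.inr k), (IHzr k).2⟩)

theorem pg_add_zero (x : PGame.{v}) : x + 0 ≤ x ∧ x ≤ x + 0 := by
  induction x with
  | mk xl xr xL xR IHl IHr =>
  refine ⟨le_iff_forall_lf.2 ⟨?_, ?_⟩, le_iff_forall_lf.2 ⟨?_, ?_⟩⟩
  · rintro (i | i)
    · exact lf_of_le_of_lf (IHl i).1 (moveLeft_lf (x := mk xl xr xL xR) i)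
    · exact PEmpty.elim i
  · intro j
    exact lf_iff_exists_le.2 (Or.inr ⟨Sum.inl j, (IHr j).1⟩)
  · intro i
    exact lf_iff_exists_le.2 (Or.inl ⟨Sum.inl i, (IHl i).2⟩)
  · rintro (j | j)
    · exact lf_of_lf_of_le (lf_moveRight (x := mk xl xr xL xR) j) (IHr j).2
    · exact PEmpty.elim j

theorem pg_neg_add (x : PGame.{v}) : -x + x ≤ 0 ∧ 0 ≤ -x + x := by
  induction x with
  | mk xl xr xL xR IHl IHr =>
  refine ⟨le_iff_forall_lf.2 ⟨?_, fun j => PEmpty.elim j⟩,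
    le_iff_forall_lf.2 ⟨fun i => PEmpty.elim i, ?_⟩⟩
  · rintro (j | i)
    · show -(xR j) + mk xl xr xL xR ⧏ 0
      exact lf_iff_exists_le.2 (Or.inr ⟨toRightMovesAdd (Sum.inr j),
        (add_moveRight_inr (x := -(xR j)) (y := mk xl xr xL xR) j).trans_le (IHr j).1⟩)
    · show -(mk xl xr xL xR) + xL i ⧏ 0
      exact lf_iff_exists_le.2 (Or.inr ⟨toRightMovesAdd (Sum.inl i),
        (add_moveRight_inl (x := -(mk xl xr xL xR)) (y := xL i) i).trans_le (IHl i).1⟩)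
  · rintro (i | j)
    · show 0 ⧏ -(xL i) + mk xl xr xL xR
      exact lf_iff_exists_le.2 (Or.inl ⟨toLeftMovesAdd (Sum.inr i),
        ((IHl i).2.trans_eq (add_moveLeft_inr (x := -(xL i)) (y := mk xl xr xL xR) i).symm)⟩)
    · show 0 ⧏ -(mk xl xr xL xR) + xR j
      exact lf_iff_exists_le.2 (Or.inl ⟨toLeftMovesAdd (Sum.inl j),
        ((IHr j).2.trans_eq (add_moveLeft_inl (x := -(mk xl xr xL xR)) (y := xR j) j).symm)⟩)

theorem pg_add_le_add_right {x y : PGame.{v}} (h : x ≤ y) (z : PGame.{v}) : x + z ≤ y + z :=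
  (pg_add_le_lf x y z).1 h

theorem pg_add_lf_add_right {x y : PGame.{v}} (h : x ⧏ y) (z : PGame.{v}) : x + z ⧏ y + z :=
  (pg_add_le_lf x y z).2 h

theorem pg_add_le_add_left {y z : PGame.{v}} (h : y ≤ z) (x : PGame.{v}) : x + y ≤ x + z :=
  le_trans (pg_add_comm_le x y) (le_trans (pg_add_le_add_right h x) (pg_add_comm_le z x))

theorem pg_add_lf_add_left {y z : PGame.{v}} (h : y ⧏ z) (x : PGame.{v}) : x + y ⧏ x + z :=
  lf_of_le_of_lf (pg_add_comm_le x y) (lf_of_lf_of_le (pg_add_lf_add_right h x) (pg_add_comm_le z x))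

theorem pg_add_lt_add_right {x y : PGame.{v}} (h : x < y) (z : PGame.{v}) : x + z < y + z :=
  ⟨pg_add_le_add_right h.1 z, pg_add_lf_add_right h.2 z⟩

theorem pg_add_lt_add_left {y z : PGame.{v}} (h : y < z) (x : PGame.{v}) : x + y < x + z :=
  ⟨pg_add_le_add_left h.1 x, pg_add_lf_add_left h.2 x⟩

theorem pg_add_congr {a b c d : PGame.{v}} (h1 : PGame.Equiv a b) (h2 : PGame.Equiv c d) :
    PGame.Equiv (a + c) (b + d) :=
  equiv_iff.2 ⟨le_trans (pg_add_le_add_right (equiv_iff.1 h1).1 c)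
      (pg_add_le_add_left (equiv_iff.1 h2).1 b),
    le_trans (pg_add_le_add_right (equiv_iff.1 h1).2 d) (pg_add_le_add_left (equiv_iff.1 h2).2 a)⟩

theorem add_comm_equiv {x y : PGame.{v}} : PGame.Equiv (x + y) (y + x) :=
  equiv_iff.2 ⟨pg_add_comm_le x y, pg_add_comm_le y x⟩

theorem add_zero_equiv (x : PGame.{v}) : PGame.Equiv (x + 0) x :=
  equiv_iff.2 (pg_add_zero x)

@[simp] theorem quot_add (x y : PGame.{v}) : (⟦x + y⟧ : Game.{v}) = ⟦x⟧ + ⟦y⟧ := by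
  show (⟦x + y⟧ : Game.{v}) = ⟦Quotient.out (⟦x⟧ : Game.{v}) + Quotient.out (⟦y⟧ : Game.{v})⟧
  exact game_eq (pg_add_congr (pg_equiv_symm (out_equiv x)) (pg_equiv_symm (out_equiv y)))

@[simp] theorem quot_neg (x : PGame.{v}) : (⟦-x⟧ : Game.{v}) = -⟦x⟧ := by
  show (⟦-x⟧ : Game.{v}) = ⟦-Quotient.out (⟦x⟧ : Game.{v})⟧
  exact game_eq (pg_neg_congr (pg_equiv_symm (out_equiv x)))

@[simp] theorem quot_zero : (⟦0⟧ : Game.{v}) = 0 := rfl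

instance isEmpty_one_rightMoves : IsEmpty (RightMoves (1 : PGame.{v})) := PEmpty.instIsEmpty

instance isEmpty_zero_leftMoves : IsEmpty (LeftMoves (0 : PGame.{v})) := PEmpty.instIsEmpty

instance isEmpty_zero_rightMoves : IsEmpty (RightMoves (0 : PGame.{v})) := PEmpty.instIsEmpty

theorem zero_lt_one : (0 : PGame.{v}) < 1 :=
  ⟨le_iff_forall_lf.2 ⟨fun i => PEmpty.elim i, fun j => PEmpty.elim j⟩,
    lf_iff_exists_le.2 (Or.inl ⟨PUnit.unit, pg_le_refl 0⟩)⟩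

end PGame

namespace Game

open PGame

noncomputable instance gameOne : One Game.{v} := ⟨⟦1⟧⟩

theorem game_add_assoc (a b c : Game.{v}) : a + b + c = a + (b + c) :=
  Quotient.inductionOn₃ a b c fun x y z => by
    rw [← quot_add, ← quot_add, ← quot_add, ← quot_add]
    exact game_eq (equiv_iff.2 (pg_add_assoc x y z))

theorem game_add_comm (a b : Game.{v}) : a + b = b + a :=
  Quotient.inductionOn₂ a b fun x y => by
    rw [← quot_add, ← quot_add]
    exact game_eq add_comm_equiv

theorem game_add_zero (a : Game.{v}) : a + 0 = a :=
  Quotient.inductionOn a fun x => by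
    rw [← quot_zero, ← quot_add]
    exact game_eq (add_zero_equiv x)

theorem game_zero_add (a : Game.{v}) : 0 + a = a := by
  rw [game_add_comm, game_add_zero]

theorem game_neg_add_cancel (a : Game.{v}) : -a + a = 0 :=
  Quotient.inductionOn a fun x => by
    rw [← quot_neg, ← quot_add, ← quot_zero]
    exact game_eq (equiv_iff.2 (pg_neg_add x))

theorem game_add_le_add_right (a b : Game.{v}) (h : a ≤ b) (c : Game.{v}) : a + c ≤ b + c := by
  revert h
  refine Quotient.inductionOn₃ a b c ?_
  intro x y z h
  rw [← quot_add, ← quot_add, quot_le_iff]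
  rw [quot_le_iff] at h
  exact pg_add_le_add_right h z

noncomputable instance gameAddCommGroup : AddCommGroup Game.{v} where
  add := (· + ·)
  add_assoc := game_add_assoc
  zero := 0
  zero_add := game_zero_add
  add_zero := game_add_zero
  nsmul := Game.nsm
  nsmul_zero := fun _ => rfl
  nsmul_succ := fun _ _ => rfl
  neg := Neg.neg
  sub := fun a b => a - b
  sub_eq_add_neg := fun _ _ => rfl
  zsmul := fun n g => n • g
  zsmul_zero' := fun _ => rfl
  zsmul_succ' := fun _ _ => rfl
  zsmul_neg' := fun _ _ => rfl
  neg_add_cancel := game_neg_add_cancel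
  add_comm := game_add_comm

noncomputable instance gamePartialOrder : PartialOrder Game.{v} where
  le := (· ≤ ·)
  lt := fun a b => a ≤ b ∧ ¬ b ≤ a
  le_refl := fun a => pg_le_refl a.out
  le_trans := fun a b c (h1 : a.out ≤ b.out) (h2 : b.out ≤ c.out) =>
    (le_trans h1 h2 : a.out ≤ c.out)
  le_antisymm := fun a b (h1 : a.out ≤ b.out) (h2 : b.out ≤ a.out) =>
    Quotient.out_equiv_out.1 (Relation.EqvGen.rel _ _ (equiv_iff.2 ⟨h1, h2⟩))

noncomputable instance gamePreorder : Preorder Game.{v} := gamePartialOrder.toPreorder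

instance gameOrdered : IsOrderedAddMonoid Game.{v} where
  add_le_add_left := game_add_le_add_right

end Game

namespace PGame

@[simp] theorem quot_one : (⟦1⟧ : Game.{v}) = 1 := rfl

theorem lt_iff_game_lt {x y : PGame.{v}} : x < y ↔ (⟦x⟧ : Game.{v}) < ⟦y⟧ :=
  ⟨fun h => ⟨quot_le_iff.2 h.1, fun h' => pg_not_le.2 h.2 (quot_le_iff.1 h')⟩,
    fun h => ⟨quot_le_iff.1 h.1, pg_not_le.1 (fun h' => h.2 (quot_le_iff.2 h'))⟩⟩

/-! numeric games -/

theorem numeric_mk_iff {l r : Type v} {L : l → PGame.{v}} {R : r → PGame.{v}} :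
    Numeric (mk l r L R) ↔ (∀ i j, L i < R j) ∧ (∀ i, Numeric (L i)) ∧ ∀ j, Numeric (R j) :=
  Iff.rfl

theorem Numeric.mk {x : PGame.{v}} (h₁ : ∀ i j, x.moveLeft i < x.moveRight j)
    (h₂ : ∀ i, Numeric (x.moveLeft i)) (h₃ : ∀ j, Numeric (x.moveRight j)) : Numeric x := by
  cases x; exact numeric_mk_iff.2 ⟨h₁, h₂, h₃⟩

theorem Numeric.moveLeft {x : PGame.{v}} (o : Numeric x) (i : x.LeftMoves) :
    Numeric (x.moveLeft i) := by
  cases x; exact (numeric_mk_iff.1 o).2.1 i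

theorem Numeric.moveRight {x : PGame.{v}} (o : Numeric x) (j : x.RightMoves) :
    Numeric (x.moveRight j) := by
  cases x; exact (numeric_mk_iff.1 o).2.2 j

theorem Numeric.left_lt_right {x : PGame.{v}} (o : Numeric x) (i : x.LeftMoves)
    (j : x.RightMoves) : x.moveLeft i < x.moveRight j := by
  cases x; exact (numeric_mk_iff.1 o).1 i j

theorem numeric_zero : Numeric (0 : PGame.{v}) :=
  numeric_mk_iff.2 ⟨fun i => PEmpty.elim i, fun i => PEmpty.elim i, fun j => PEmpty.elim j⟩

theorem pg_lf_asymm (x : PGame.{v}) :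
    ∀ y : PGame.{v}, Numeric x → Numeric y → x ⧏ y → ¬ y ⧏ x := by
  induction x with
  | mk xl xr xL xR IHl IHr =>
  intro y ox oy h1 h2
  rcases lf_iff_exists_le.1 h1 with ⟨i, hi⟩ | ⟨j, hj⟩ <;>
    rcases lf_iff_exists_le.1 h2 with ⟨i', hi'⟩ | ⟨j', hj'⟩
  · exact IHl i' _ (ox.moveLeft i') (oy.moveLeft i)
      (lf_of_lf_of_le (moveLeft_lf i') hi) (lf_of_lf_of_le (moveLeft_lf i) hi')
  · exact pg_not_le.2 (oy.left_lt_right i j').2 (le_trans hj' hi)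
  · exact pg_not_le.2 (ox.left_lt_right i' j).2 (le_trans hj hi')
  · exact IHr j _ (ox.moveRight j) (oy.moveRight j')
      (lf_of_le_of_lf hj (lf_moveRight j')) (lf_of_le_of_lf hj' (lf_moveRight j))

theorem lf_iff_lt {x y : PGame.{v}} (ox : Numeric x) (oy : Numeric y) : x ⧏ y ↔ x < y :=
  ⟨fun h => (⟨pg_not_lf.1 (pg_lf_asymm x y ox oy h), h⟩ : x ≤ y ∧ x ⧏ y), fun h => h.2⟩

theorem Numeric.moveLeft_lt {x : PGame.{v}} (o : Numeric x) (i : x.LeftMoves) :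
    x.moveLeft i < x :=
  (lf_iff_lt (o.moveLeft i) o).1 (moveLeft_lf i)

theorem Numeric.lt_moveRight {x : PGame.{v}} (o : Numeric x) (j : x.RightMoves) :
    x < x.moveRight j :=
  (lf_iff_lt o (o.moveRight j)).1 (lf_moveRight j)

theorem Numeric.neg {x : PGame.{v}} (o : Numeric x) : Numeric (-x) := by
  induction x with
  | mk xl xr xL xR IHl IHr =>
  exact numeric_mk_iff.2 ⟨fun j i => pg_neg_lt_neg (o.left_lt_right i j),
    fun j => IHr j (o.moveRight j), fun i => IHl i (o.moveLeft i)⟩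

theorem pg_numeric_add (x : PGame.{v}) :
    ∀ y : PGame.{v}, Numeric x → Numeric y → Numeric (x + y) := by
  induction x with
  | mk xl xr xL xR IHxl IHxr =>
  intro y
  induction y with
  | mk yl yr yL yR IHyl IHyr =>
  intro ox oy
  refine numeric_mk_iff.2 ⟨?_, ?_, ?_⟩
  · rintro (i | i) (j | j)
    · exact pg_add_lt_add_right (ox.left_lt_right i j) (mk yl yr yL yR)
    · exact lt_trans (pg_add_lt_add_right (ox.moveLeft_lt i) (mk yl yr yL yR))
        (pg_add_lt_add_left (oy.lt_moveRight j) (mk xl xr xL xR))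
    · exact lt_trans (pg_add_lt_add_left (oy.moveLeft_lt i) (mk xl xr xL xR))
        (pg_add_lt_add_right (ox.lt_moveRight j) (mk yl yr yL yR))
    · exact pg_add_lt_add_left (oy.left_lt_right i j) (mk xl xr xL xR)
  · rintro (i | i)
    · exact IHxl i _ (ox.moveLeft i) oy
    · exact IHyl i ox (oy.moveLeft i)
  · rintro (j | j)
    · exact IHxr j _ (ox.moveRight j) oy
    · exact IHyr j ox (oy.moveRight j)

theorem Numeric.add {x y : PGame.{v}} (ox : Numeric x) (oy : Numeric y) : Numeric (x + y) :=
  pg_numeric_add x y ox oy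

/-! powers of one half -/

theorem powHalf_zero : powHalf.{v} 0 = 1 := rfl

theorem powHalf_moveLeft (n : ℕ) (i : (powHalf.{v} n).LeftMoves) :
    (powHalf.{v} n).moveLeft i = 0 := by
  cases n <;> rfl

theorem zero_lf_powHalf (n : ℕ) : (0 : PGame.{v}) ⧏ powHalf n := by
  cases n <;> exact lf_iff_exists_le.2 (Or.inl ⟨PUnit.unit, pg_le_refl 0⟩)

theorem zero_le_powHalf (n : ℕ) : (0 : PGame.{v}) ≤ powHalf n := by
  cases n with
  | zero => exact le_iff_forall_lf.2 ⟨fun i => PEmpty.elim i, fun j => PEmpty.elim j⟩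
  | succ n => exact le_iff_forall_lf.2 ⟨fun i => PEmpty.elim i, fun _ => zero_lf_powHalf n⟩

theorem powHalf_pos (n : ℕ) : (0 : PGame.{v}) < powHalf n :=
  ⟨zero_le_powHalf n, zero_lf_powHalf n⟩

theorem numeric_powHalf (n : ℕ) : Numeric (powHalf.{v} n) := by
  induction n with
  | zero => exact numeric_mk_iff.2 ⟨fun _ j => PEmpty.elim j, fun _ => numeric_zero,
      fun j => PEmpty.elim j⟩
  | succ n ih => exact numeric_mk_iff.2 ⟨fun _ _ => powHalf_pos n, fun _ => numeric_zero,
      fun _ => ih⟩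

theorem pg_powHalf_step (n : ℕ)
    (hprev : ∀ m, n = m + 1 → PGame.Equiv (powHalf.{v} (m + 1) + powHalf (m + 1)) (powHalf m)) :
    PGame.Equiv (powHalf.{v} (n + 1) + powHalf (n + 1)) (powHalf n) := by
  have hlt : (⟦powHalf.{v} (n + 1)⟧ : Game.{v}) < ⟦powHalf n⟧ :=
    lt_iff_game_lt.1 ((numeric_powHalf (n + 1)).lt_moveRight PUnit.unit)
  have hpos : (0 : Game.{v}) < ⟦powHalf (n + 1)⟧ := lt_iff_game_lt.1 (powHalf_pos (n + 1))
  refine equiv_iff.2 ⟨le_iff_forall_lf.2 ⟨?_, ?_⟩, le_iff_forall_lf.2 ⟨?_, ?_⟩⟩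
  · rintro (i | i)
    · show (0 : PGame.{v}) + powHalf (n + 1) ⧏ powHalf n
      apply lf_of_lt
      rw [lt_iff_game_lt, quot_add, quot_zero, zero_add]
      exact hlt
    · show powHalf (n + 1) + (0 : PGame.{v}) ⧏ powHalf n
      apply lf_of_lt
      rw [lt_iff_game_lt, quot_add, quot_zero, add_zero]
      exact hlt
  · intro j
    cases n with
    | zero => exact PEmpty.elim j
    | succ m =>
      show powHalf (m + 2) + powHalf (m + 2) ⧏ powHalf m
      refine lf_iff_exists_le.2 (Or.inr ⟨Sum.inl PUnit.unit, ?_⟩)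
      show powHalf (m + 1) + powHalf (m + 2) ≤ powHalf m
      rw [le_iff_game_le, quot_add]
      calc (⟦powHalf.{v} (m + 1)⟧ : Game.{v}) + ⟦powHalf (m + 2)⟧
          ≤ ⟦powHalf (m + 1)⟧ + ⟦powHalf (m + 1)⟧ := add_le_add le_rfl hlt.le
        _ = ⟦powHalf m⟧ := by rw [← quot_add]; exact game_eq (hprev m rfl)
  · intro i
    rw [powHalf_moveLeft]
    apply lf_of_lt
    rw [lt_iff_game_lt, quot_add, quot_zero]
    exact add_pos hpos hpos
  · rintro (j | j)
    · show powHalf n ⧏ powHalf n + powHalf (n + 1)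
      apply lf_of_lt
      rw [lt_iff_game_lt, quot_add]
      exact lt_add_of_pos_right _ hpos
    · show powHalf n ⧏ powHalf (n + 1) + powHalf n
      apply lf_of_lt
      rw [lt_iff_game_lt, quot_add]
      exact lt_add_of_pos_left _ hpos

theorem add_powHalf_succ_self_eq_powHalf (n : ℕ) :
    PGame.Equiv (powHalf.{v} (n + 1) + powHalf (n + 1)) (powHalf n) := by
  induction n with
  | zero => exact pg_powHalf_step 0 (fun m h => absurd h (by omega))
  | succ n ih =>
    exact pg_powHalf_step (n + 1) (fun m h => by
      obtain rfl : n = m := by omega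
      exact ih)

end PGame

end SetTheory


namespace BallAux

noncomputable abbrev ph (q : ℕ) : Game := ⟦powHalf q⟧

lemma ph_pos (q : ℕ) : 0 < ph q := lt_iff_game_lt.mp (powHalf_pos q)

lemma ph_succ (q : ℕ) : ph (q+1) + ph (q+1) = ph q := by
  simpa using game_eq (add_powHalf_succ_self_eq_powHalf q)

lemma ph_shift (q r : ℕ) : ph q = ((2:ℤ)^r) • ph (q + r) := by
  induction r with
  | zero => simp
  | succ r ih =>
      have h2 : (2:ℤ) • ph (q + (r+1)) = ph (q + r) := by
        rw [two_zsmul, ← Nat.add_assoc, ph_succ]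
      rw [pow_succ, mul_zsmul, h2, ih]

lemma dv_eq_smul (a : ℤ) (q r : ℕ) : dyadicVal a q = (a * 2^r) • ph (q + r) := by
  rw [dyadicVal, mul_zsmul]
  congr 1
  exact ph_shift q r

lemma zsmul_ph_lt {t : ℕ} {a b : ℤ} (h : a < b) : a • ph t < b • ph t := by
  have h1 : (0:Game) < (b - a) • ph t := by
    obtain ⟨n, hn⟩ : ∃ n : ℕ, (b - a : ℤ) = (n : ℤ) + 1 := ⟨(b - a - 1).toNat, by omega⟩
    rw [hn, add_zsmul, one_zsmul]
    have : (0:Game) ≤ (n:ℤ) • ph t := zsmul_nonneg (ph_pos t).le (by positivity)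
    calc (0:Game) < ph t := ph_pos t
      _ ≤ (n:ℤ) • ph t + ph t := le_add_of_nonneg_left this
  have := add_lt_add_right h1 (a • ph t)
  simpa [sub_zsmul, sub_add_cancel] using this

lemma dv_le_iff {a b : ℤ} {q r : ℕ} : dyadicVal a q ≤ dyadicVal b r ↔ a * 2^r ≤ b * 2^q := by
  rw [dv_eq_smul a q r, dv_eq_smul b r q, Nat.add_comm r q]
  constructor
  · intro h
    by_contra hc
    exact absurd (h.trans_lt (zsmul_ph_lt (by omega))) (lt_irrefl _)
  · intro h
    rcases eq_or_lt_of_le h with h | h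
    · rw [h]
    · exact (zsmul_ph_lt h).le

lemma dv_lt_iff {a b : ℤ} {q r : ℕ} : dyadicVal a q < dyadicVal b r ↔ a * 2^r < b * 2^q := by
  constructor
  · intro h
    by_contra hc
    exact absurd (h.trans_le (dv_le_iff.mpr (by omega))) (lt_irrefl _)
  · intro h
    exact lt_of_le_not_ge (dv_le_iff.mpr h.le)
      (fun hc => absurd (dv_le_iff.mp hc) (by omega))

lemma dv_eq_iff {a b : ℤ} {q r : ℕ} : dyadicVal a q = dyadicVal b r ↔ a * 2^r = b * 2^q := by
  constructor
  · intro h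
    have h1 := dv_le_iff.mp h.le
    have h2 := dv_le_iff.mp h.ge
    omega
  · intro h
    exact le_antisymm (dv_le_iff.mpr h.le) (dv_le_iff.mpr h.ge)

lemma dv_add (a b : ℤ) (q : ℕ) : dyadicVal a q + dyadicVal b q = dyadicVal (a+b) q := by
  rw [dyadicVal, dyadicVal, dyadicVal, add_zsmul]


/-- iterated sum representative -/
noncomputable def nRep : ℕ → PGame → PGame
  | 0, _ => 0
  | n+1, w => nRep n w + w

lemma nRep_numeric {w : PGame} (hw : w.Numeric) : ∀ n, (nRep n w).Numeric
  | 0 => numeric_zero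
  | n+1 => (nRep_numeric hw n).add hw

lemma nRep_val (w : PGame) : ∀ n : ℕ, (⟦nRep n w⟧ : Game) = (n : ℤ) • (⟦w⟧ : Game)
  | 0 => by simp [nRep]
  | n+1 => by
      show (⟦nRep n w + w⟧ : Game) = _
      rw [quot_add, nRep_val w n]
      push_cast
      rw [add_zsmul, one_zsmul]

lemma dval_rep (k : ℤ) (q : ℕ) : ∃ w : PGame, w.Numeric ∧ (⟦w⟧ : Game) = dyadicVal k q := by
  rcases Int.eq_nat_or_neg k with ⟨n, rfl | rfl⟩
  · exact ⟨nRep n (powHalf q), nRep_numeric (numeric_powHalf q) n,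
      (nRep_val _ n).trans rfl⟩
  · refine ⟨-nRep n (powHalf q), (nRep_numeric (numeric_powHalf q) n).neg, ?_⟩
    rw [quot_neg, nRep_val]
    rw [dyadicVal, neg_zsmul]

lemma num_total {g h : PGame} (hg : g.Numeric) (hh : h.Numeric) :
    (⟦g⟧ : Game) ≤ ⟦h⟧ ∨ (⟦h⟧ : Game) < ⟦g⟧ := by
  by_cases hle : g ≤ h
  · exact Or.inl (le_iff_game_le.mp hle)
  · right
    rw [← lt_iff_game_lt]
    exact (PGame.lf_iff_lt hh hg).mp (PGame.not_le.mp hle)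

lemma cancel_two {X Y : Game} (hX : ∃ g, g.Numeric ∧ (⟦g⟧:Game) = X)
    (hY : ∃ g, g.Numeric ∧ (⟦g⟧:Game) = Y) (h : X + X = Y + Y) : X = Y := by
  obtain ⟨g, hg, rfl⟩ := hX
  obtain ⟨h', hh, rfl⟩ := hY
  rcases num_total hg hh with h1 | h1
  · rcases num_total hh hg with h2 | h2
    · exact le_antisymm h1 h2
    · exact absurd h (by
        have := add_lt_add h2 h2
        exact fun he => absurd (he ▸ this) (lt_irrefl _))
  · exact absurd h (by
      have := add_lt_add h1 h1
      exact fun he => absurd (he ▸ this) (lt_irrefl _))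

/-- The simplicity lemma. -/
lemma simplicity {x y z : PGame}
    (h1 : ∀ i, (⟦z.moveLeft i⟧ : Game) ≤ ⟦x⟧)
    (h2 : ∀ j, (⟦y⟧ : Game) ≤ ⟦z.moveRight j⟧)
    (h3 : x ⧏ z) (h4 : z ⧏ y) :
    (⟦ball x y⟧ : Game) = ⟦z⟧ := by
  apply game_eq
  constructor
  · apply le_iff_forall_lf.2
    constructor
    · intro i
      exact h3
    · intro j
      exact lf_of_lf_of_le (lf_moveRight (x := ball x y) (⟨⟩ : PUnit)) (le_iff_game_le.mpr (h2 j))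
  · apply le_iff_forall_lf.2
    constructor
    · intro i
      exact lf_of_le_of_lf (le_iff_game_le.mpr (h1 i)) (moveLeft_lf (x := ball x y) (⟨⟩ : PUnit))
    · intro j
      exact h4


instance canonNat_rightMoves_isEmpty : ∀ n, IsEmpty (canonNat n).RightMoves
  | 0 => by rw [canonNat]; exact PEmpty.instIsEmpty
  | n+1 => by rw [canonNat]; exact PEmpty.instIsEmpty

lemma canonNat_numeric : ∀ n, (canonNat n).Numeric
  | 0 => numeric_zero
  | n+1 => by
      rw [canonNat]
      exact Numeric.mk (fun i j => j.elim) (fun _ => canonNat_numeric n) (fun j => j.elim)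

lemma game_zero_lt_one : (0 : Game) < 1 := by
  have := lt_iff_game_lt.mp PGame.zero_lt_one
  simpa using this

lemma canonNat_succ_def (n : ℕ) :
    canonNat (n+1) = ⟨PUnit, PEmpty, fun _ => canonNat n, PEmpty.elim⟩ := rfl

lemma lf_canonNat_succ (n : ℕ) : canonNat n ⧏ canonNat (n+1) :=
  moveLeft_lf (x := canonNat (n+1)) (show (canonNat (n+1)).LeftMoves from PUnit.unit)

lemma canonNat_succ_game : ∀ n : ℕ, (⟦canonNat (n+1)⟧ : Game) = ⟦canonNat n⟧ + 1 := by
  intro n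
  induction n using Nat.strong_induction_on with
  | _ n ih =>
    have key : canonNat (n+1) ≤ canonNat n + 1 ∧ canonNat n + 1 ≤ canonNat (n+1) := by
      constructor
      · apply le_iff_forall_lf.2
        constructor
        · intro i
          show canonNat n ⧏ canonNat n + 1
          apply lf_of_lt
          rw [lt_iff_game_lt, quot_add, quot_one]
          exact lt_add_of_pos_right _ game_zero_lt_one
        · intro j
          rcases toRightMovesAdd.symm j with j' | j'
          · exact isEmptyElim j'
          · exact isEmptyElim (by exact j' : (1 : PGame).RightMoves)
      · apply le_iff_forall_lf.2
        constructor
        · intro i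
          apply leftMoves_add_cases i
          · intro i'
            rw [add_moveLeft_inl]
            match n, i' with
            | 0, i' => exact isEmptyElim (show PEmpty from i')
            | m+1, i' =>
              show canonNat m + 1 ⧏ canonNat (m+1+1)
              have hml : canonNat m + 1 ≤ canonNat (m+1) := by
                rw [le_iff_game_le, quot_add, quot_one, ← ih m (by omega)]
              exact lf_of_le_of_lf hml (lf_canonNat_succ (m+1))
          · intro i'
            rw [add_moveLeft_inr]
            show canonNat n + (1 : PGame).moveLeft i' ⧏ canonNat (n+1)
            have : canonNat n + (1 : PGame).moveLeft i' ≤ canonNat n := by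
              rcases i' with ⟨⟩
              exact (add_zero_equiv (canonNat n)).1
            exact lf_of_le_of_lf this (lf_canonNat_succ n)
        · intro j
          exact (show PEmpty from j).elim
    have h := game_eq key
    rw [quot_add, quot_one] at h
    exact h

lemma canonNat_val : ∀ n : ℕ, (⟦canonNat n⟧ : Game) = (n : ℤ) • (1 : Game)
  | 0 => by simp [canonNat]
  | n+1 => by
      rw [canonNat_succ_game n, canonNat_val n]
      push_cast
      rw [add_zsmul, one_zsmul]


lemma dv_zero (k : ℤ) : dyadicVal k 0 = k • (1 : Game) := by
  rw [dyadicVal, powHalf_zero, quot_one]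

lemma canonInt_numeric (k : ℤ) : (canonInt k).Numeric := by
  rw [canonInt]
  split
  · exact canonNat_numeric _
  · exact (canonNat_numeric _).neg

lemma canonInt_val (k : ℤ) : (⟦canonInt k⟧ : Game) = dyadicVal k 0 := by
  rw [canonInt, dv_zero]
  split
  · next h =>
      rw [canonNat_val]
      congr 1
      omega
  · next h =>
      rw [quot_neg, canonNat_val, ← neg_zsmul]
      congr 1
      omega

lemma canonInt_ofNat (n : ℕ) : canonInt (n : ℤ) = canonNat n := by
  rw [canonInt, if_pos (by positivity), Int.toNat_natCast]

lemma canonInt_negSucc (n : ℕ) : canonInt (-((n+1 : ℕ) : ℤ)) = -canonNat (n+1) := by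
  have h : (-(-((n+1 : ℕ) : ℤ))).toNat = n+1 := by omega
  rw [canonInt, if_neg (by omega), h]

lemma canonInt_left (k : ℤ) :
    ∀ i, (⟦(canonInt k).moveLeft i⟧ : Game) ≤ dyadicVal (k-1) 0 := by
  rcases Int.eq_nat_or_neg k with ⟨n, rfl | rfl⟩
  · rw [canonInt_ofNat]
    cases n with
    | zero => exact fun i => isEmptyElim (show PEmpty from i)
    | succ m =>
        intro i
        show (⟦canonNat m⟧ : Game) ≤ dyadicVal ((m+1 : ℕ) - 1) 0
        rw [canonNat_val, dv_zero]
        apply le_of_eq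
        congr 1
        push_cast
        ring
  · cases n with
    | zero =>
        intro i
        rw [show (-((0:ℕ):ℤ)) = ((0:ℕ):ℤ) by norm_num, canonInt_ofNat 0] at i
        exact isEmptyElim (show PEmpty from i)
    | succ m =>
        rw [canonInt_negSucc]
        exact fun i => isEmptyElim (show PEmpty from i)

lemma canonInt_right (k : ℤ) :
    ∀ j, dyadicVal (k+1) 0 ≤ (⟦(canonInt k).moveRight j⟧ : Game) := by
  rcases Int.eq_nat_or_neg k with ⟨n, rfl | rfl⟩
  · rw [canonInt_ofNat]
    cases n with
    | zero => exact fun j => isEmptyElim (show PEmpty from j)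
    | succ m => exact fun j => isEmptyElim (show PEmpty from j)
  · cases n with
    | zero =>
        intro j
        rw [show (-((0:ℕ):ℤ)) = ((0:ℕ):ℤ) by norm_num, canonInt_ofNat 0] at j
        exact isEmptyElim (show PEmpty from j)
    | succ m =>
        rw [canonInt_negSucc]
        intro j
        show dyadicVal _ 0 ≤ (⟦-canonNat m⟧ : Game)
        rw [quot_neg, canonNat_val, dv_zero, ← neg_zsmul]
        apply le_of_eq
        congr 1
        push_cast
        ring


lemma add_lf_add_left' {y z : PGame} (h : y ⧏ z) (x : PGame) : x + y ⧏ x + z := by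
  rw [← PGame.not_le] at h ⊢
  intro hc
  apply h
  have hg := le_iff_game_le.mp hc
  rw [quot_add, quot_add] at hg
  exact le_iff_game_le.mpr ((add_le_add_iff_left _).mp hg)

lemma add_lf_add_right' {x y : PGame} (h : x ⧏ y) (z : PGame) : x + z ⧏ y + z := by
  rw [← PGame.not_le] at h ⊢
  intro hc
  apply h
  have hg := le_iff_game_le.mp hc
  rw [quot_add, quot_add] at hg
  exact le_iff_game_le.mpr ((add_le_add_iff_right _).mp hg)

lemma dv_le_shift {a b : ℤ} (q : ℕ) (h : 2*a ≤ b) : dyadicVal a q ≤ dyadicVal b (q+1) := by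
  apply dv_le_iff.mpr
  rw [pow_succ]
  have h2q : (0:ℤ) ≤ 2^q := by positivity
  nlinarith

lemma dv_shift_le {a b : ℤ} (q : ℕ) (h : b ≤ 2*a) : dyadicVal b (q+1) ≤ dyadicVal a q := by
  apply dv_le_iff.mpr
  rw [pow_succ]
  have h2q : (0:ℤ) ≤ 2^q := by positivity
  nlinarith

lemma dv_shift_eq {a b : ℤ} (q : ℕ) (h : b = 2*a) : dyadicVal b (q+1) = dyadicVal a q :=
  le_antisymm (dv_shift_le q (by omega)) (dv_le_shift q (by omega))

lemma dv_mono {a b : ℤ} (q : ℕ) (h : a ≤ b) : dyadicVal a q ≤ dyadicVal b q := by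
  apply dv_le_iff.mpr
  have h2q : (0:ℤ) ≤ 2^q := by positivity
  nlinarith

lemma dv_strictMono {a b : ℤ} (q : ℕ) (h : a < b) : dyadicVal a q < dyadicVal b q := by
  apply dv_lt_iff.mpr
  have h2q : (0:ℤ) < 2^q := by positivity
  nlinarith

def cd : ℕ → ℤ → PGame
  | 0, k => canonInt k
  | (q+1), k => if 2 ∣ k then cd q (k/2) else ball (cd q (k/2)) (cd q (k/2 + 1))

lemma cd_main (q : ℕ) : ∀ (k : ℤ),
    (cd.{u} q k).Numeric ∧ ((⟦cd.{u} q k⟧ : Game) = dyadicVal k q ∧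
    ((∀ i, (⟦(cd.{u} q k).moveLeft i⟧ : Game) ≤ dyadicVal (k-1) q) ∧
    (∀ j, dyadicVal (k+1) q ≤ ⟦(cd.{u} q k).moveRight j⟧))) := by
  induction q with
  | zero => exact fun k => ⟨canonInt_numeric k, canonInt_val k, canonInt_left k, canonInt_right k⟩
  | succ q ih =>
    intro k
    by_cases h2 : (2:ℤ) ∣ k
    · have hk2 : 2 * (k/2) = k := by omega
      refine ⟨?_, ?_, ?_, ?_⟩
      · rw [cd, if_pos h2]
        exact (ih (k/2)).1
      · rw [cd, if_pos h2, (ih (k/2)).2.1, ← dv_shift_eq q (by omega : k = 2 * (k/2))]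
      · rw [cd, if_pos h2]
        intro i
        exact ((ih (k/2)).2.2.1 i).trans (dv_le_shift q (by omega))
      · rw [cd, if_pos h2]
        intro j
        exact (dv_shift_le q (by omega)).trans ((ih (k/2)).2.2.2 j)
    · obtain ⟨hNu, hVu, hLu, hRu⟩ := ih (k/2)
      obtain ⟨hNv, hVv, hLv, hRv⟩ := ih (k/2 + 1)
      have hb : k = 2*(k/2) + 1 := by omega
      have huv : cd q (k/2) < cd q (k/2 + 1) := by
        rw [lt_iff_game_lt, hVu, hVv]
        exact dv_strictMono q (by omega)
      have hNB : (ball (cd q (k/2)) (cd q (k/2 + 1))).Numeric :=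
        Numeric.mk (fun _ _ => huv) (fun _ => hNu) (fun _ => hNv)
      have huB : (⟦cd q (k/2)⟧ : Game) < ⟦ball (cd q (k/2)) (cd q (k/2 + 1))⟧ := by
        rw [← lt_iff_game_lt]
        exact hNB.moveLeft_lt PUnit.unit
      have hBv : (⟦ball (cd q (k/2)) (cd q (k/2 + 1))⟧ : Game) < ⟦cd q (k/2 + 1)⟧ := by
        rw [← lt_iff_game_lt]
        exact hNB.lt_moveRight PUnit.unit
      have hBlfv : ball (cd q (k/2)) (cd q (k/2 + 1)) ⧏ cd q (k/2 + 1) :=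
        lf_moveRight (x := ball (cd q (k/2)) (cd q (k/2 + 1))) PUnit.unit
      have hulfB : cd q (k/2) ⧏ ball (cd q (k/2)) (cd q (k/2 + 1)) :=
        moveLeft_lf (x := ball (cd q (k/2)) (cd q (k/2 + 1))) PUnit.unit
      have hsum : (⟦ball (cd q (k/2)) (cd q (k/2 + 1))⟧ : Game) + ⟦ball (cd q (k/2)) (cd q (k/2 + 1))⟧ = ⟦cd q (k/2)⟧ + ⟦cd q (k/2 + 1)⟧ := by
        have hequiv : ball (cd q (k/2)) (cd q (k/2 + 1)) + ball (cd q (k/2)) (cd q (k/2 + 1)) ≤ cd q (k/2) + cd q (k/2 + 1) ∧ cd q (k/2) + cd q (k/2 + 1) ≤ ball (cd q (k/2)) (cd q (k/2 + 1)) + ball (cd q (k/2)) (cd q (k/2 + 1)) := by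
          constructor
          · apply le_iff_forall_lf.2
            constructor
            · intro i
              apply leftMoves_add_cases i
              · intro i'
                rw [add_moveLeft_inl]
                show cd q (k/2) + ball (cd q (k/2)) (cd q (k/2 + 1)) ⧏ cd q (k/2) + cd q (k/2 + 1)
                exact add_lf_add_left' hBlfv _
              · intro i'
                rw [add_moveLeft_inr]
                show ball (cd q (k/2)) (cd q (k/2 + 1)) + cd q (k/2) ⧏ cd q (k/2) + cd q (k/2 + 1)
                exact lf_of_le_of_lf add_comm_equiv.1 (add_lf_add_left' hBlfv _)
            · intro j
              apply rightMoves_add_cases j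
              · intro j'
                rw [add_moveRight_inl]
                apply lf_of_lt
                rw [lt_iff_game_lt, quot_add, quot_add]
                have h1 : (⟦ball (cd q (k/2)) (cd q (k/2 + 1))⟧ : Game) < ⟦(cd q (k/2)).moveRight j'⟧ :=
                  hBv.trans_le (hVv ▸ hRu j')
                exact add_lt_add h1 hBv
              · intro j'
                rw [add_moveRight_inr]
                apply lf_of_lt
                rw [lt_iff_game_lt, quot_add, quot_add]
                have h1 : dyadicVal (k/2+2) q ≤ (⟦(cd q (k/2 + 1)).moveRight j'⟧ : Game) := by
                  have h := hRv j'
                  rwa [show k/2+1+1 = k/2+2 by ring] at h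
                calc (⟦ball (cd q (k/2)) (cd q (k/2 + 1))⟧:Game) + ⟦ball (cd q (k/2)) (cd q (k/2 + 1))⟧
                      < ⟦cd q (k/2 + 1)⟧ + ⟦cd q (k/2 + 1)⟧ := add_lt_add hBv hBv
                  _ = dyadicVal (k/2+1) q + dyadicVal (k/2+1) q := by rw [hVv]
                  _ = dyadicVal (k/2) q + dyadicVal (k/2+2) q := by
                        rw [dv_add, dv_add, show k/2+1+(k/2+1) = k/2+(k/2+2) by ring]
                  _ ≤ ⟦cd q (k/2)⟧ + ⟦(cd q (k/2 + 1)).moveRight j'⟧ := by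
                        rw [hVu]
                        exact add_le_add_right h1 _
          · apply le_iff_forall_lf.2
            constructor
            · intro i
              apply leftMoves_add_cases i
              · intro i'
                rw [add_moveLeft_inl]
                apply lf_of_lt
                rw [lt_iff_game_lt, quot_add, quot_add]
                calc (⟦(cd q (k/2)).moveLeft i'⟧:Game) + ⟦cd q (k/2 + 1)⟧
                      ≤ dyadicVal (k/2-1) q + dyadicVal (k/2+1) q := by
                        rw [hVv]; exact add_le_add_left (hLu i') _
                  _ = dyadicVal (k/2) q + dyadicVal (k/2) q := by
                        rw [dv_add, dv_add, show k/2-1+(k/2+1) = k/2+(k/2) by ring]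
                  _ = ⟦cd q (k/2)⟧ + ⟦cd q (k/2)⟧ := by rw [hVu]
                  _ < ⟦ball (cd q (k/2)) (cd q (k/2 + 1))⟧ + ⟦ball (cd q (k/2)) (cd q (k/2 + 1))⟧ :=
                        add_lt_add huB huB
              · intro i'
                rw [add_moveLeft_inr]
                apply lf_of_lt
                rw [lt_iff_game_lt, quot_add, quot_add]
                have h1 : (⟦(cd q (k/2 + 1)).moveLeft i'⟧ : Game) ≤ ⟦cd q (k/2)⟧ := by
                  rw [hVu]
                  have h := hLv i'
                  rwa [show k/2+1-1 = k/2 by ring] at h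
                exact add_lt_add huB (h1.trans_lt huB)
            · intro j
              apply rightMoves_add_cases j
              · intro j'
                rw [add_moveRight_inl]
                show cd q (k/2) + cd q (k/2 + 1) ⧏ cd q (k/2 + 1) + ball (cd q (k/2)) (cd q (k/2 + 1))
                exact lf_of_lf_of_le (add_lf_add_right' hulfB _) add_comm_equiv.1
              · intro j'
                rw [add_moveRight_inr]
                show cd q (k/2) + cd q (k/2 + 1) ⧏ ball (cd q (k/2)) (cd q (k/2 + 1)) + cd q (k/2 + 1)
                exact add_lf_add_right' hulfB _
        have h := game_eq hequiv
        rw [quot_add, quot_add] at h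
        exact h
      have hVB : (⟦ball (cd q (k/2)) (cd q (k/2 + 1))⟧ : Game) = dyadicVal k (q+1) := by
        apply cancel_two ⟨_, hNB, rfl⟩ (dval_rep k (q+1))
        rw [hsum, hVu, hVv, dv_add, dv_add, dv_shift_eq q (show k+k = 2*(k/2+(k/2+1)) by omega)]
      refine ⟨?_, ?_, ?_, ?_⟩
      · rw [cd, if_neg h2]
        exact hNB
      · rw [cd, if_neg h2]
        exact hVB
      · rw [cd, if_neg h2]
        intro i
        show (⟦cd q (k/2)⟧ : Game) ≤ dyadicVal (k-1) (q+1)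
        rw [hVu, dv_shift_eq q (show k-1 = 2*(k/2) by omega)]
      · rw [cd, if_neg h2]
        intro j
        show dyadicVal (k+1) (q+1) ≤ (⟦cd q (k/2 + 1)⟧ : Game)
        rw [hVv, dv_shift_eq q (show k+1 = 2*(k/2+1) by omega)]


lemma cd_numeric (q : ℕ) (k : ℤ) : (cd q k).Numeric := (cd_main q k).1

lemma cd_val (q : ℕ) (k : ℤ) : (⟦cd q k⟧ : Game) = dyadicVal k q := (cd_main q k).2.1

lemma cd_left (q : ℕ) (k : ℤ) :
    ∀ i, (⟦(cd q k).moveLeft i⟧ : Game) ≤ dyadicVal (k-1) q := (cd_main q k).2.2.1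

lemma cd_right (q : ℕ) (k : ℤ) :
    ∀ j, dyadicVal (k+1) q ≤ (⟦(cd q k).moveRight j⟧ : Game) := (cd_main q k).2.2.2

lemma dv_sub (a b : ℤ) (q : ℕ) : dyadicVal a q - dyadicVal b q = dyadicVal (a-b) q := by
  have h := dv_add (a-b) b q
  rw [sub_add_cancel] at h
  rw [← h]
  abel

lemma dval_le_or_lt {w : PGame} (hw : w.Numeric) (k : ℤ) (q : ℕ) :
    dyadicVal k q ≤ (⟦w⟧ : Game) ∨ (⟦w⟧ : Game) < dyadicVal k q := by
  obtain ⟨r, hr, hval⟩ := dval_rep k q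
  rcases num_total hr hw with h | h
  · exact Or.inl (hval ▸ h)
  · exact Or.inr (hval ▸ h)

lemma le_dval_or_lt {w : PGame} (hw : w.Numeric) (k : ℤ) (q : ℕ) :
    (⟦w⟧ : Game) ≤ dyadicVal k q ∨ dyadicVal k q < (⟦w⟧ : Game) := by
  obtain ⟨r, hr, hval⟩ := dval_rep k q
  rcases num_total hw hr with h | h
  · exact Or.inl (hval ▸ h)
  · exact Or.inr (hval ▸ h)

lemma num_lf_of_dval_lt {w z : PGame} (hw : w.Numeric) (hz : z.Numeric)
    (h : (⟦w⟧ : Game) < ⟦z⟧) : w ⧏ z :=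
  lf_of_lt (lt_iff_game_lt.mpr h)

end BallAux

open BallAux

/-- A balanced ball `⟨x | y⟩` of nonzero value `a / 2 ^ p` (with `a` a nonzero integer if
`p = 0`, and `a` odd if `p ≥ 1`) has `y − x ≤ 2 / 2 ^ p` as values; equivalently its
radius `Δ` satisfies `−1/2^p ≤ Δ < 0`. -/
theorem radius_le_canonical_radius (x y : PGame) (hx : x.Numeric) (hy : y.Numeric)
    (hG : (ball x y).Numeric) (hxy : x < y)
    (hbal : (⟦ball x y⟧ : Game) + ⟦ball x y⟧ = ⟦x⟧ + ⟦y⟧)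
    (a : ℤ) (p : ℕ) (ha : (p = 0 ∧ a ≠ 0) ∨ (1 ≤ p ∧ Odd a))
    (hval : (⟦ball x y⟧ : Game) = dyadicVal a p) :
    (⟦y⟧ : Game) - ⟦x⟧ ≤ dyadicVal 2 p := by
  classical
  have hxG : (⟦x⟧ : Game) < ⟦ball x y⟧ := by
    rw [← lt_iff_game_lt]
    exact hG.moveLeft_lt PUnit.unit
  have hGy : (⟦ball x y⟧ : Game) < ⟦y⟧ := by
    rw [← lt_iff_game_lt]
    exact hG.lt_moveRight PUnit.unit
  suffices hkey : dyadicVal (a-1) p ≤ (⟦x⟧ : Game) by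
    calc (⟦y⟧ : Game) - ⟦x⟧ = (⟦x⟧ + ⟦y⟧) - ⟦x⟧ - ⟦x⟧ := by abel
      _ = (dyadicVal a p + dyadicVal a p) - ⟦x⟧ - ⟦x⟧ := by rw [← hbal, hval]
      _ ≤ (dyadicVal a p + dyadicVal a p) - dyadicVal (a-1) p - dyadicVal (a-1) p :=
          sub_le_sub (sub_le_sub_left hkey _) hkey
      _ = dyadicVal 2 p := by
          rw [sub_sub, dv_add, dv_add, dv_sub, show a+a-(a-1+(a-1)) = 2 by ring]
  by_contra hLne
  have hxL : (⟦x⟧ : Game) < dyadicVal (a-1) p := by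
    rcases dval_le_or_lt hx (a-1) p with h | h
    · exact absurd h hLne
    · exact h
  have hyeq : (⟦y⟧ : Game) = (dyadicVal a p + dyadicVal a p) - ⟦x⟧ := by
    rw [← hval, hbal]
    abel
  have hR : dyadicVal (a+1) p < (⟦y⟧ : Game) := by
    rw [hyeq]
    have h1 : dyadicVal (a+1) p = (dyadicVal a p + dyadicVal a p) - dyadicVal (a-1) p := by
      rw [dv_add, dv_sub, show a+a-(a-1) = a+1 by ring]
    rw [h1]
    exact sub_lt_sub_left hxL _
  -- the minimal level containing a dyadic strictly between x and y
  have hPw : ∃ k : ℤ, (⟦x⟧ : Game) < dyadicVal k (p-1) ∧ dyadicVal k (p-1) < ⟦y⟧ := by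
    rcases ha with ⟨hp0, ha0⟩ | ⟨hp1, hodd⟩
    · subst hp0
      exact ⟨a, hval ▸ hxG, hval ▸ hGy⟩
    · obtain ⟨p', hp'⟩ : ∃ p', p = p' + 1 := ⟨p - 1, by omega⟩
      obtain ⟨t, ht⟩ := hodd
      have he : dyadicVal (a-1) p = dyadicVal ((a-1)/2) (p-1) := by
        rw [hp']
        have : (p' + 1) - 1 = p' := by omega
        rw [this]
        exact dv_shift_eq p' (by omega)
      refine ⟨(a-1)/2, he ▸ hxL, ?_⟩
      rw [← he]
      exact (dv_strictMono p (by omega)).trans (hval ▸ hGy)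
  have hex : ∃ q : ℕ, ∃ k : ℤ, (⟦x⟧ : Game) < dyadicVal k q ∧ dyadicVal k q < ⟦y⟧ :=
    ⟨p - 1, hPw⟩
  have hq0le : Nat.find hex ≤ p - 1 := Nat.find_le hPw
  have hq0P := Nat.find_spec hex
  have hmin : ∀ m, m < Nat.find hex → ¬ ∃ k : ℤ, (⟦x⟧ : Game) < dyadicVal k m ∧ dyadicVal k m < ⟦y⟧ :=
    fun m hm => Nat.find_min hex hm
  obtain ⟨k, hxk, hky⟩ := hq0P
  generalize hgen : Nat.find hex = q0 at hxk hky hq0le hmin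
  rcases q0 with _ | s
  · -- integer case
    rcases dval_le_or_lt hx 0 0 with hx0 | hx0
    · -- 0 ≤ x
      have hk1 : (1:ℤ) ≤ k := by
        have h := dv_lt_iff.mp (lt_of_le_of_lt hx0 hxk)
        omega
      have hQex : ∃ n : ℕ, (⟦x⟧ : Game) < dyadicVal ((n:ℤ)+1) 0 :=
        ⟨(k-1).toNat, by rw [show ((k-1).toNat : ℤ) + 1 = k by omega]; exact hxk⟩
      have hk'x := Nat.find_spec hQex
      have hmle : Nat.find hQex ≤ (k-1).toNat := Nat.find_le (by
        rw [show ((k-1).toNat : ℤ) + 1 = k by omega]; exact hxk)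
      have hk'y : dyadicVal ((Nat.find hQex : ℤ)+1) 0 < (⟦y⟧ : Game) :=
        (dv_mono 0 (by omega)).trans_lt hky
      have hlow : dyadicVal ((Nat.find hQex : ℤ)) 0 ≤ (⟦x⟧ : Game) := by
        rcases Nat.eq_zero_or_pos (Nat.find hQex) with hm0 | hmpos
        · rw [hm0]
          exact_mod_cast hx0
        · obtain ⟨n, hn⟩ : ∃ n, Nat.find hQex = n + 1 := ⟨Nat.find hQex - 1, by omega⟩
          have hnotQ : ¬ ((⟦x⟧ : Game) < dyadicVal ((n:ℤ)+1) 0) :=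
            Nat.find_min hQex (by omega)
          rcases dval_le_or_lt hx ((n:ℤ)+1) 0 with h | h
          · rw [hn]
            exact_mod_cast h
          · exact absurd h hnotQ
      set m := Nat.find hQex with hmdef
      -- z := canonNat (m+1)
      have hzval : (⟦canonNat (m+1)⟧ : Game) = dyadicVal ((m:ℤ)+1) 0 := by
        rw [canonNat_val, dv_zero]
        norm_cast
      have hGz : (⟦ball x y⟧ : Game) = ⟦canonNat (m+1)⟧ := by
        apply simplicity
        · intro i
          show (⟦canonNat m⟧ : Game) ≤ ⟦x⟧
          rw [canonNat_val, ← dv_zero]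
          exact hlow
        · intro j
          exact isEmptyElim (show PEmpty from j)
        · exact num_lf_of_dval_lt hx (canonNat_numeric _) (by rw [hzval]; exact hk'x)
        · exact num_lf_of_dval_lt (canonNat_numeric _) hy (by rw [hzval]; exact hk'y)
      have heq : a * 2^0 = ((m:ℤ)+1) * 2^p :=
        dv_eq_iff.mp ((hval.symm.trans hGz).trans hzval)
      rcases ha with ⟨hp0, ha0⟩ | ⟨hp1, hodd⟩
      · subst hp0
        have hak : a = (m:ℤ)+1 := by omega
        have : (⟦x⟧:Game) < ⟦x⟧ := hxL.trans_le (by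
          rw [show a-1 = (m:ℤ) by omega]
          exact hlow)
        exact absurd this (lt_irrefl _)
      · obtain ⟨p', hp'⟩ : ∃ p', p = p' + 1 := ⟨p - 1, by omega⟩
        obtain ⟨t, ht⟩ := hodd
        rw [hp'] at heq
        obtain ⟨X, hX⟩ : ∃ X : ℤ, a = 2 * X :=
          ⟨((m:ℤ)+1) * 2^p', by linear_combination heq⟩
        omega
    · rcases le_dval_or_lt hy 0 0 with hy0 | hy0
      · -- y ≤ 0
        have hk1 : k ≤ -1 := by
          have h := dv_lt_iff.mp (hky.trans_le hy0)
          omega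
        have hQex : ∃ n : ℕ, dyadicVal (-(n:ℤ)-1) 0 < (⟦y⟧ : Game) :=
          ⟨(-k-1).toNat, by rw [show -((-k-1).toNat : ℤ) - 1 = k by omega]; exact hky⟩
        have hk'y := Nat.find_spec hQex
        have hmle : Nat.find hQex ≤ (-k-1).toNat := Nat.find_le (by
          rw [show -((-k-1).toNat : ℤ) - 1 = k by omega]; exact hky)
        have hk'x : (⟦x⟧ : Game) < dyadicVal (-(Nat.find hQex : ℤ)-1) 0 :=
          hxk.trans_le (dv_mono 0 (by omega))
        have hup : (⟦y⟧ : Game) ≤ dyadicVal (-(Nat.find hQex : ℤ)) 0 := by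
          rcases Nat.eq_zero_or_pos (Nat.find hQex) with hm0 | hmpos
          · rw [hm0]
            exact_mod_cast hy0
          · obtain ⟨n, hn⟩ : ∃ n, Nat.find hQex = n + 1 := ⟨Nat.find hQex - 1, by omega⟩
            have hnotQ : ¬ (dyadicVal (-(n:ℤ)-1) 0 < (⟦y⟧ : Game)) :=
              Nat.find_min hQex (by omega)
            rcases le_dval_or_lt hy (-(n:ℤ)-1) 0 with h | h
            · rw [hn]
              have he : (-(((n:ℕ)+1 : ℕ)):ℤ) = -(n:ℤ)-1 := by push_cast; ring
              rw [he]
              exact h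
            · exact absurd h hnotQ
        set m := Nat.find hQex with hmdef
        have hzval : (⟦-canonNat (m+1)⟧ : Game) = dyadicVal (-(m:ℤ)-1) 0 := by
          rw [quot_neg, canonNat_val, dv_zero, ← neg_zsmul]
          congr 1
          push_cast
          ring
        have hGz : (⟦ball x y⟧ : Game) = ⟦-canonNat (m+1)⟧ := by
          apply simplicity
          · intro i
            exact isEmptyElim (show PEmpty from i)
          · intro j
            show (⟦y⟧ : Game) ≤ ⟦-canonNat m⟧
            rw [quot_neg, canonNat_val, ← neg_zsmul, ← dv_zero]
            exact hup.trans (dv_mono 0 (by omega))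
          · exact num_lf_of_dval_lt hx (canonNat_numeric _).neg (by rw [hzval]; exact hk'x)
          · exact num_lf_of_dval_lt (canonNat_numeric _).neg hy (by rw [hzval]; exact hk'y)
        have heq : a * 2^0 = (-(m:ℤ)-1) * 2^p :=
          dv_eq_iff.mp ((hval.symm.trans hGz).trans hzval)
        rcases ha with ⟨hp0, ha0⟩ | ⟨hp1, hodd⟩
        · subst hp0
          have hak : a = -(m:ℤ)-1 := by omega
          have : dyadicVal (a+1) 0 < dyadicVal (a+1) 0 := hR.trans_le (by
            rw [hak, show -(m:ℤ)-1+1 = -(m:ℤ) by ring]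
            exact hup)
          exact absurd this (lt_irrefl _)
        · obtain ⟨p', hp'⟩ : ∃ p', p = p' + 1 := ⟨p - 1, by omega⟩
          obtain ⟨t, ht⟩ := hodd
          rw [hp'] at heq
          obtain ⟨X, hX⟩ : ∃ X : ℤ, a = 2 * X :=
            ⟨(-(m:ℤ)-1) * 2^p', by linear_combination heq⟩
          omega
      · -- x < 0 < y
        have hGz : (⟦ball x y⟧ : Game) = ⟦(0 : PGame)⟧ := by
          apply simplicity
          · intro i
            exact isEmptyElim (show PEmpty from i)
          · intro j
            exact isEmptyElim (show PEmpty from j)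
          · exact num_lf_of_dval_lt hx numeric_zero (by
              rw [quot_zero, show (0:Game) = dyadicVal 0 0 from (zero_zsmul _).symm]
              exact hx0)
          · exact num_lf_of_dval_lt numeric_zero hy (by
              rw [quot_zero, show (0:Game) = dyadicVal 0 0 from (zero_zsmul _).symm]
              exact hy0)
        have heq : a * 2^0 = 0 * 2^p := by
          apply dv_eq_iff.mp
          rw [← hval, hGz, quot_zero]
          exact (zero_zsmul _).symm
        have ha0 : a = 0 := by omega
        rcases ha with ⟨hp0, hane⟩ | ⟨hp1, hodd⟩
        · exact hane ha0
        · rw [ha0] at hodd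
          exact ((Int.not_odd_iff_even.mpr Even.zero)) hodd
  · -- q0 = s + 1 : odd dyadic case
    have hs : ¬ ∃ k : ℤ, (⟦x⟧ : Game) < dyadicVal k s ∧ dyadicVal k s < ⟦y⟧ :=
      hmin s (by omega)
    have hkodd : ¬ ((2:ℤ) ∣ k) := by
      intro hdvd
      apply hs
      refine ⟨k/2, ?_, ?_⟩
      · rw [← dv_shift_eq s (show k = 2*(k/2) by omega)]
        exact hxk
      · rw [← dv_shift_eq s (show k = 2*(k/2) by omega)]
        exact hky
    have hL1 : dyadicVal (k-1) (s+1) ≤ (⟦x⟧ : Game) := by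
      have he : dyadicVal (k-1) (s+1) = dyadicVal ((k-1)/2) s :=
        dv_shift_eq s (by omega)
      have hlty : dyadicVal ((k-1)/2) s < (⟦y⟧ : Game) := by
        rw [← he]
        exact (dv_strictMono (s+1) (by omega)).trans hky
      rcases dval_le_or_lt hx ((k-1)/2) s with h | h
      · rw [he]
        exact h
      · exact absurd ⟨(k-1)/2, h, hlty⟩ hs
    have hR1 : (⟦y⟧ : Game) ≤ dyadicVal (k+1) (s+1) := by
      have he : dyadicVal (k+1) (s+1) = dyadicVal ((k+1)/2) s :=
        dv_shift_eq s (by omega)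
      have hltx : (⟦x⟧ : Game) < dyadicVal ((k+1)/2) s := by
        rw [← he]
        exact hxk.trans (dv_strictMono (s+1) (by omega))
      rcases le_dval_or_lt hy ((k+1)/2) s with h | h
      · rw [he]
        exact h
      · exact absurd ⟨(k+1)/2, hltx, h⟩ hs
    have hGz : (⟦ball x y⟧ : Game) = ⟦cd (s+1) k⟧ := by
      apply simplicity
      · intro i
        exact (cd_left (s+1) k i).trans hL1
      · intro j
        exact hR1.trans (cd_right (s+1) k j)
      · exact num_lf_of_dval_lt hx (cd_numeric _ _) (by rw [cd_val]; exact hxk)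
      · exact num_lf_of_dval_lt (cd_numeric _ _) hy (by rw [cd_val]; exact hky)
    have heq : a * 2^(s+1) = k * 2^p :=
      dv_eq_iff.mp ((hval.symm.trans hGz).trans (cd_val (s+1) k))
    rcases ha with ⟨hp0, ha0⟩ | ⟨hp1, hodd⟩
    · omega
    · have hsp : s + 1 ≤ p - 1 := hq0le
      obtain ⟨d, hd⟩ : ∃ d, p = (d + 1) + (s + 1) := ⟨p - s - 2, by omega⟩
      rw [hd] at heq
      have h2ne : ((2:ℤ)^(s+1)) ≠ 0 := by positivity
      have heq2 : a * 2^(s+1) = (k * 2^(d+1)) * 2^(s+1) := by linear_combination heq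
      have hak : a = k * 2^(d+1) := mul_right_cancel₀ h2ne heq2
      obtain ⟨t, ht⟩ := hodd
      obtain ⟨X, hX⟩ : ∃ X : ℤ, a = 2 * X := ⟨k * 2^d, by linear_combination hak⟩
      omega
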